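/- Let (F_m) be a sequence of Vinnikov polynomials of degree n converging coefficientwise to a homogeneous degree-n polynomial F ∈ ℝ[x,y,z] with F(1,0,0) ≠ 0, F(0,1,0) ≠ 0 and F(0,0,1) ≠ 0. Then F is a Vinnikov polynomial. (This is the closedness part of the statement that the map (X,Y,Z) ↦ det(xX+yY+zZ) is proper onto the locus where the three corner coefficients are nonzero.) -/

import Mathlib

open scoped ComplexOrder

/-- The determinant polynomial `det(xX + yY + zZ)` in `ℂ[x,y,z]`. -/
noncomputable def detPoly3 {m : Type*} [Fintype m] [DecidableEq m]
    (X Y Z : Matrix m m ℂ) : MvPolynomial (Fin 3) ℂ :=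
  Matrix.det (Matrix.of fun a b =>
    MvPolynomial.C (X a b) * MvPolynomial.X 0 + MvPolynomial.C (Y a b) * MvPolynomial.X 1 +
      MvPolynomial.C (Z a b) * MvPolynomial.X 2)

/-- `F ∈ 𝓗ₙ`: a Vinnikov polynomial of degree `n`. -/
def IsVinnikov (n : ℕ) (F : MvPolynomial (Fin 3) ℝ) : Prop :=
  F.IsHomogeneous n ∧ ∃ X Y Z : Matrix (Fin n) (Fin n) ℂ,
    X.PosDef ∧ Y.PosDef ∧ Z.PosDef ∧
      MvPolynomial.map (algebraMap ℝ ℂ) F = detPoly3 X Y Z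

section Auxiliary

open MvPolynomial Matrix Filter

variable {k : Type*} [Fintype k] [DecidableEq k]

lemma eval_detPoly3 (X Y Z : Matrix k k ℂ) (v : Fin 3 → ℂ) :
    MvPolynomial.eval v (detPoly3 X Y Z) = (v 0 • X + v 1 • Y + v 2 • Z).det := by
  unfold detPoly3
  rw [RingHom.map_det]
  congr 1
  ext a b
  simp [RingHom.mapMatrix_apply, Matrix.map_apply, Matrix.add_apply, Matrix.smul_apply, mul_comm]

lemma eval_map_ofReal (P : MvPolynomial (Fin 3) ℝ) (w : Fin 3 → ℝ) :
    MvPolynomial.eval (fun i => (w i : ℂ)) (MvPolynomial.map (algebraMap ℝ ℂ) P)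
      = ((MvPolynomial.eval w P : ℝ) : ℂ) := by
  rw [MvPolynomial.eval_map]
  rw [show ((MvPolynomial.eval w P : ℝ) : ℂ) = (algebraMap ℝ ℂ) (MvPolynomial.eval w P) from rfl]
  rw [show MvPolynomial.eval w P = MvPolynomial.eval₂ (RingHom.id ℝ) w P from rfl]
  rw [MvPolynomial.eval₂_comp_left]
  rfl

lemma quad_apply (A : Matrix k k ℂ) (i j : k) (lam : ℂ) :
    dotProduct (star ((Pi.single i 1 : k → ℂ) + lam • (Pi.single j 1 : k → ℂ)))
      (A *ᵥ ((Pi.single i 1 : k → ℂ) + lam • (Pi.single j 1 : k → ℂ)))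
      = A i i + lam * A i j + star lam * A j i + star lam * lam * A j j := by
  have h1 : ∀ (a b : k),
      dotProduct (star (Pi.single a 1 : k → ℂ)) (A *ᵥ (Pi.single b 1 : k → ℂ)) = A a b := by
    intro a b
    rw [mulVec_single]
    have hs : star (Pi.single a 1 : k → ℂ) = (Pi.single a 1 : k → ℂ) := by
      ext x
      by_cases h : x = a <;> simp [h, Pi.single_apply]
    rw [hs, single_dotProduct]
    simp
  simp only [star_add, star_smul, add_dotProduct, smul_dotProduct, mulVec_add, mulVec_smul,
    dotProduct_add, dotProduct_smul, star_trivial, h1, smul_eq_mul]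
  ring

lemma single_quad (A : Matrix k k ℂ) (a b : k) :
    dotProduct (star (Pi.single a 1 : k → ℂ)) (A *ᵥ (Pi.single b 1 : k → ℂ)) = A a b := by
  rw [mulVec_single]
  have hs : star (Pi.single a 1 : k → ℂ) = (Pi.single a 1 : k → ℂ) := by
    ext x
    by_cases h : x = a <;> simp [h, Pi.single_apply]
  rw [hs, single_dotProduct]
  simp

lemma entries_bounded {A B : Matrix k k ℂ} (hA : A.PosSemidef) (hB : B.PosSemidef)
    (hAB : A + B = 1) (i j : k) : ‖A i j‖ ≤ 2 := by
  have hdiagA : ∀ a, 0 ≤ (A a a).re ∧ (A a a).im = 0 := by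
    intro a
    have h := hA.dotProduct_mulVec_nonneg (Pi.single a 1 : k → ℂ)
    rw [single_quad] at h
    exact ⟨(Complex.le_def.1 h).1, ((Complex.le_def.1 h).2).symm⟩
  have hdiagB : ∀ a, 0 ≤ (B a a).re := by
    intro a
    have h := hB.dotProduct_mulVec_nonneg (Pi.single a 1 : k → ℂ)
    rw [single_quad] at h
    exact (Complex.le_def.1 h).1
  have hdiag1 : ∀ a, (A a a).re ≤ 1 := by
    intro a
    have h : A a a + B a a = 1 := by
      have := congrFun (congrFun (congrArg (fun M => (M : Matrix k k ℂ)) hAB) a) a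
      simpa [Matrix.add_apply, Matrix.one_apply_eq] using this
    have := congrArg Complex.re h
    simp only [Complex.add_re, Complex.one_re] at this
    linarith [hdiagB a]
  rcases eq_or_ne i j with rfl | hij
  · calc ‖A i i‖ ≤ |(A i i).re| + |(A i i).im| := Complex.norm_le_abs_re_add_abs_im _
    _ ≤ 2 := by
        rw [(hdiagA i).2]
        simp [abs_of_nonneg (hdiagA i).1]
        linarith [hdiag1 i, (hdiagA i).1]
  · have key : ∀ lam : ℂ, star lam * lam = 1 → |(lam * A i j).re| ≤ 1 := by
      intro lam hlam
      set v : k → ℂ := (Pi.single i 1 : k → ℂ) + lam • (Pi.single j 1 : k → ℂ) with hv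
      have hqA := hA.dotProduct_mulVec_nonneg v
      have hqB := hB.dotProduct_mulVec_nonneg v
      have hsum : dotProduct (star v) (A *ᵥ v) + dotProduct (star v) (B *ᵥ v)
          = dotProduct (star v) ((A + B) *ᵥ v) := by
        rw [Matrix.add_mulVec, dotProduct_add]
      rw [hAB] at hsum
      have h1v : dotProduct (star v) ((1 : Matrix k k ℂ) *ᵥ v) = 2 := by
        rw [hv, quad_apply]
        rw [Matrix.one_apply_eq, Matrix.one_apply_ne hij, Matrix.one_apply_ne (Ne.symm hij),
          Matrix.one_apply_eq, hlam]
        ring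
      rw [h1v] at hsum
      have hAv : dotProduct (star v) (A *ᵥ v)
          = A i i + A j j + ((2 * (lam * A i j).re : ℝ) : ℂ) := by
        rw [hv, quad_apply]
        have hji : A j i = star (A i j) := by
          conv_lhs => rw [← hA.1]
          rfl
        rw [hji, hlam]
        have : lam * A i j + star (lam * A i j) = ((2 * (lam * A i j).re : ℝ) : ℂ) := by
          rw [← Complex.add_conj]
          rfl
        rw [← this]
        rw [star_mul']
        ring
      have hqA0 : 0 ≤ (dotProduct (star v) (A *ᵥ v)).re := (Complex.le_def.1 hqA).1
      have hqB0 : 0 ≤ (dotProduct (star v) (B *ᵥ v)).re := (Complex.le_def.1 hqB).1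
      have hre : (dotProduct (star v) (A *ᵥ v)).re + (dotProduct (star v) (B *ᵥ v)).re = 2 := by
        have := congrArg Complex.re hsum
        simpa using this
      have hAvre : (dotProduct (star v) (A *ᵥ v)).re
          = (A i i).re + (A j j).re + 2 * (lam * A i j).re := by
        rw [hAv]; simp
      rw [hAvre] at hqA0 hre
      rw [abs_le]
      constructor <;> linarith [(hdiagA i).1, (hdiagA j).1, hdiag1 i, hdiag1 j]
    have hre : |(A i j).re| ≤ 1 := by simpa using key 1 (by norm_num)
    have him : |(A i j).im| ≤ 1 := by
      have := key Complex.I (by simp [Complex.ext_iff])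
      simpa [Complex.mul_re, Complex.I_re, Complex.I_im, abs_neg] using this
    calc ‖A i j‖ ≤ |(A i j).re| + |(A i j).im| := Complex.norm_le_abs_re_add_abs_im _
    _ ≤ 2 := by linarith

lemma posDef_of_posSemidef_det_ne_zero {A : Matrix k k ℂ} (hA : A.PosSemidef)
    (hdet : A.det ≠ 0) : A.PosDef := by
  open scoped MatrixOrder in
  obtain ⟨B, hB⟩ : ∃ B : Matrix k k ℂ, A = Bᴴ * B := ⟨CFC.sqrt A, by
    rw [(CFC.sqrt_nonneg A).posSemidef.1.eq, CFC.sqrt_mul_sqrt_self A hA.nonneg]⟩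
  refine .of_dotProduct_mulVec_pos hA.1 fun x hx => ?_
  have hBdet : IsUnit B := by
    rw [Matrix.isUnit_iff_isUnit_det, isUnit_iff_ne_zero]
    intro h0
    apply hdet
    rw [hB, Matrix.det_mul, h0, mul_zero]
  have hBx : B *ᵥ x ≠ 0 := by
    intro h0
    exact hx (Matrix.mulVec_injective_iff_isUnit.2 hBdet (by simpa using h0 : B *ᵥ x = B *ᵥ 0))
  have key : dotProduct (star x) (A *ᵥ x) = dotProduct (star (B *ᵥ x)) (B *ᵥ x) := by
    rw [Matrix.star_mulVec, hB, ← Matrix.mulVec_mulVec, Matrix.dotProduct_mulVec]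
  rw [key]
  exact Matrix.dotProduct_star_self_pos_iff.2 hBx

omit [DecidableEq k] in
lemma posSemidef_of_tendsto {A : ℕ → Matrix k k ℂ} {L : Matrix k k ℂ}
    (hA : ∀ m, (A m).PosSemidef)
    (h : ∀ i j, Tendsto (fun m => A m i j) atTop (nhds (L i j))) : L.PosSemidef := by
  refine Matrix.PosSemidef.of_dotProduct_mulVec_nonneg ?_ ?_
  · ext i j
    rw [Matrix.conjTranspose_apply]
    have h1 : Tendsto (fun m => star (A m j i)) atTop (nhds (star (L j i))) :=
      (Complex.continuous_conj.tendsto _).comp (h j i)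
    have h2 : (fun m => star (A m j i)) = fun m => A m i j := by
      funext m
      have := congrFun (congrFun (congrArg (fun M => (M : Matrix k k ℂ)) (hA m).1) i) j
      simpa [Matrix.conjTranspose_apply] using this
    rw [h2] at h1
    exact tendsto_nhds_unique h1 (h i j)
  · intro x
    have htend : Tendsto (fun m => dotProduct (star x) ((A m) *ᵥ x)) atTop
        (nhds (dotProduct (star x) (L *ᵥ x))) := by
      simp only [dotProduct, Matrix.mulVec, Pi.star_apply]
      apply tendsto_finset_sum
      intro i _
      apply Tendsto.const_mul
      apply tendsto_finset_sum
      intro j _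
      exact (h i j).mul_const _
    have hclosed : IsClosed {z : ℂ | 0 ≤ z} := by
      have : {z : ℂ | 0 ≤ z} = Complex.re ⁻¹' (Set.Ici 0) ∩ Complex.im ⁻¹' {0} := by
        ext z
        simp [Complex.le_def, eq_comm]
      rw [this]
      exact (isClosed_Ici.preimage Complex.continuous_re).inter
        (isClosed_singleton.preimage Complex.continuous_im)
    exact hclosed.mem_of_tendsto htend (Filter.Eventually.of_forall fun m => (hA m).dotProduct_mulVec_nonneg x)

lemma posDef_smul_ofReal {A : Matrix k k ℂ} (hA : A.PosDef) {c : ℝ} (hc : 0 < c) :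
    ((c : ℂ) • A).PosDef := by
  refine Matrix.PosDef.of_dotProduct_mulVec_pos ?_ ?_
  · show ((c : ℂ) • A)ᴴ = (c : ℂ) • A
    rw [Matrix.conjTranspose_smul, hA.1]
    congr 1
    exact Complex.conj_ofReal c
  · intro x hx
    rw [Matrix.smul_mulVec, dotProduct_smul, smul_eq_mul]
    exact mul_pos (by exact_mod_cast Complex.zero_lt_real.2 hc) (hA.dotProduct_mulVec_pos hx)

lemma normalize_rep {X Y Z : Matrix k k ℂ} (hX : X.PosDef) (hY : Y.PosDef) (hZ : Z.PosDef) :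
    ∃ X' Y' Z' : Matrix k k ℂ, X'.PosSemidef ∧ Y'.PosSemidef ∧ Z'.PosSemidef ∧
      X' + Y' + Z' = 1 ∧
      ∀ v : Fin 3 → ℂ, (v 0 • X + v 1 • Y + v 2 • Z).det
        = (X + Y + Z).det * (v 0 • X' + v 1 • Y' + v 2 • Z').det := by
  set S := X + Y + Z with hSdef
  have hS : S.PosDef := (hX.add hY).add hZ
  open scoped MatrixOrder in
  set R := CFC.sqrt S with hRdef
  open scoped MatrixOrder in
  have hRR : R * R = S := CFC.sqrt_mul_sqrt_self S hS.posSemidef.nonneg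
  open scoped MatrixOrder in
  have hRherm : Rᴴ = R := (CFC.sqrt_nonneg S).posSemidef.1
  have hSdet : S.det ≠ 0 := hS.det_pos.ne'
  have hRdet : IsUnit R.det := by
    rw [isUnit_iff_ne_zero]
    intro h0
    apply hSdet
    rw [← hRR, Matrix.det_mul, h0, mul_zero]
  set M := R⁻¹ with hMdef
  have hMherm : Mᴴ = M := by
    rw [hMdef, Matrix.conjTranspose_nonsing_inv, hRherm]
  have hMM : M * M = S⁻¹ := by
    rw [hMdef, ← Matrix.mul_inv_rev, hRR]
  have hMSM : Mᴴ * S * M = 1 := by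
    rw [hMherm, hMdef, ← hRR]
    simp only [Matrix.mul_assoc]
    rw [Matrix.mul_nonsing_inv R hRdet, Matrix.mul_one, Matrix.nonsing_inv_mul R hRdet]
  refine ⟨Mᴴ * X * M, Mᴴ * Y * M, Mᴴ * Z * M,
    hX.posSemidef.conjTranspose_mul_mul_same M, hY.posSemidef.conjTranspose_mul_mul_same M,
    hZ.posSemidef.conjTranspose_mul_mul_same M, ?_, ?_⟩
  · rw [← hMSM, hSdef]
    simp only [Matrix.mul_add, Matrix.add_mul]
  · intro v
    have hlin : v 0 • (Mᴴ * X * M) + v 1 • (Mᴴ * Y * M) + v 2 • (Mᴴ * Z * M)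
        = Mᴴ * (v 0 • X + v 1 • Y + v 2 • Z) * M := by
      simp only [Matrix.mul_add, Matrix.add_mul, Matrix.mul_smul, Matrix.smul_mul]
    rw [hlin, Matrix.det_mul, Matrix.det_mul]
    have hdetM : Mᴴ.det * M.det = S.det⁻¹ := by
      rw [hMherm, ← Matrix.det_mul, hMM, Matrix.det_nonsing_inv, Ring.inverse_eq_inv]
    rw [show Mᴴ.det * (v 0 • X + v 1 • Y + v 2 • Z).det * M.det
        = (Mᴴ.det * M.det) * (v 0 • X + v 1 • Y + v 2 • Z).det from by ring, hdetM]
    rw [← mul_assoc, mul_inv_cancel₀ hSdet, one_mul]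

noncomputable def degSet (n : ℕ) : Finset (Fin 3 →₀ ℕ) :=
  Finset.image (fun f : Fin 3 → Fin (n+1) =>
    Finsupp.equivFunOnFinite.symm (fun i => (f i : ℕ))) Finset.univ

lemma support_subset_degSet {n : ℕ} {P : MvPolynomial (Fin 3) ℝ} (hP : P.IsHomogeneous n) :
    P.support ⊆ degSet n := by
  intro d hd
  have hcoeff : coeff d P ≠ 0 := MvPolynomial.mem_support_iff.1 hd
  have hdeg := hP hcoeff
  have hle : ∀ i, d i ≤ n := by
    intro i
    have := Finsupp.le_weight (1 : Fin 3 → ℕ) (s := i) (by simp) d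
    simpa [hdeg] using this
  refine Finset.mem_image.2 ⟨fun i => ⟨d i, Nat.lt_succ_of_le (hle i)⟩, Finset.mem_univ _, ?_⟩
  ext i
  simp [Finsupp.equivFunOnFinite]

lemma eval_map_sum {n : ℕ} {P : MvPolynomial (Fin 3) ℝ} (hP : P.IsHomogeneous n)
    (v : Fin 3 → ℂ) :
    MvPolynomial.eval v (MvPolynomial.map (algebraMap ℝ ℂ) P)
      = ∑ d ∈ degSet n, ((P.coeff d : ℝ) : ℂ) * ∏ i, v i ^ d i := by
  rw [MvPolynomial.eval_eq']
  rw [Finset.sum_subset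
    ((MvPolynomial.support_map_subset _ _).trans (support_subset_degSet hP))]
  · apply Finset.sum_congr rfl
    intro d _
    rw [MvPolynomial.coeff_map]
    rfl
  · intro d _ hd
    rw [MvPolynomial.notMem_support_iff.1 hd, zero_mul]

lemma tendsto_eval_map {n : ℕ} {Fs : ℕ → MvPolynomial (Fin 3) ℝ} {F : MvPolynomial (Fin 3) ℝ}
    (hFs : ∀ m, (Fs m).IsHomogeneous n) (hF : F.IsHomogeneous n)
    (hconv : ∀ d : Fin 3 →₀ ℕ,
      Tendsto (fun m => (Fs m).coeff d) atTop (nhds (F.coeff d)))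
    (v : Fin 3 → ℂ) :
    Tendsto (fun m => MvPolynomial.eval v (MvPolynomial.map (algebraMap ℝ ℂ) (Fs m))) atTop
      (nhds (MvPolynomial.eval v (MvPolynomial.map (algebraMap ℝ ℂ) F))) := by
  simp only [eval_map_sum (hFs _), eval_map_sum hF]
  apply tendsto_finset_sum
  intro d _
  exact (((Complex.continuous_ofReal.tendsto _).comp (hconv d)).mul_const _)

omit [DecidableEq k] in
lemma tendsto_matrix_entrywise {f : ℕ → Matrix k k ℂ} {L : Matrix k k ℂ}
    (h : ∀ i j, Tendsto (fun m => f m i j) atTop (nhds (L i j))) :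
    Tendsto f atTop (nhds L) := by
  apply tendsto_pi_nhds.2
  intro i
  apply tendsto_pi_nhds.2
  intro j
  exact h i j

end Auxiliary

/-- 𝓗ₙ is closed where the corner coefficients do not vanish: a coefficientwise limit of
Vinnikov polynomials which is homogeneous of degree `n` and does not vanish at the three
coordinate points is again a Vinnikov polynomial. -/
theorem vinnikov_closed (n : ℕ) (Fs : ℕ → MvPolynomial (Fin 3) ℝ)
    (F : MvPolynomial (Fin 3) ℝ) (hFs : ∀ m, IsVinnikov n (Fs m))
    (hconv : ∀ d : Fin 3 →₀ ℕ,
      Filter.Tendsto (fun m => (Fs m).coeff d) Filter.atTop (nhds (F.coeff d)))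
    (hhom : F.IsHomogeneous n)
    (h1 : MvPolynomial.eval ![1, 0, 0] F ≠ 0)
    (h2 : MvPolynomial.eval ![0, 1, 0] F ≠ 0)
    (h3 : MvPolynomial.eval ![0, 0, 1] F ≠ 0) :
    IsVinnikov n F := by
  classical
  open MvPolynomial Matrix Filter in
  rcases Nat.eq_zero_or_pos n with hn | hn
  · -- degree 0 case: F = 1
    subst hn
    have hFs1 : ∀ m, Fs m = 1 := by
      intro m
      obtain ⟨-, X, Y, Z, -, -, -, hdet⟩ := hFs m
      have hmap1 : MvPolynomial.map (algebraMap ℝ ℂ) (Fs m) = 1 := by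
        rw [hdet]
        unfold detPoly3
        exact Matrix.det_isEmpty
      have hinj := MvPolynomial.map_injective (algebraMap ℝ ℂ)
        (algebraMap ℝ ℂ).injective (σ := Fin 3)
      apply hinj
      rw [hmap1]
      exact ((MvPolynomial.map (algebraMap ℝ ℂ)).map_one).symm
    have hF1 : F = 1 := by
      apply MvPolynomial.ext
      intro d
      have h := hconv d
      simp only [hFs1] at h
      exact tendsto_nhds_unique h tendsto_const_nhds
    refine ⟨hhom, 0, 0, 0, ?_, ?_, ?_, ?_⟩
    · exact ⟨Matrix.isHermitian_zero, fun x hx => absurd (Subsingleton.elim x 0) hx⟩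
    · exact ⟨Matrix.isHermitian_zero, fun x hx => absurd (Subsingleton.elim x 0) hx⟩
    · exact ⟨Matrix.isHermitian_zero, fun x hx => absurd (Subsingleton.elim x 0) hx⟩
    · rw [hF1, (MvPolynomial.map (algebraMap ℝ ℂ)).map_one]
      unfold detPoly3
      exact Matrix.det_isEmpty.symm
  · -- main case
    have hhomFs : ∀ m, (Fs m).IsHomogeneous n := fun m => (hFs m).1
    choose X Y Z hX hY hZ hdet using fun m => (hFs m).2
    choose X' Y' Z' hX' hY' hZ' hsum1 hdet' using
      fun m => normalize_rep (hX m) (hY m) (hZ m)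
    set w1 : Fin 3 → ℝ := ![1, 1, 1] with hw1
    set s : ℕ → ℝ := fun m => MvPolynomial.eval w1 (Fs m) with hs
    -- the basic evaluation identity
    have heval : ∀ m (v : Fin 3 → ℂ),
        MvPolynomial.eval v (MvPolynomial.map (algebraMap ℝ ℂ) (Fs m))
          = (v 0 • X m + v 1 • Y m + v 2 • Z m).det := by
      intro m v
      rw [hdet m, eval_detPoly3]
    have hSm : ∀ m, ((s m : ℝ) : ℂ) = (X m + Y m + Z m).det := by
      intro m
      have h := eval_map_ofReal (Fs m) w1
      rw [heval m (fun i => ((w1 i : ℝ) : ℂ))] at h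
      rw [← h]
      simp [hw1]
    have keym : ∀ m (v : Fin 3 → ℂ),
        MvPolynomial.eval v (MvPolynomial.map (algebraMap ℝ ℂ) (Fs m))
          = ((s m : ℝ) : ℂ) * (v 0 • X' m + v 1 • Y' m + v 2 • Z' m).det := by
      intro m v
      rw [heval m v, hdet' m v, hSm m]
    -- positivity of s m
    have hspos : ∀ m, 0 < s m := by
      intro m
      have hd := (((hX m).add (hY m)).add (hZ m)).det_pos
      rw [← hSm m] at hd
      exact Complex.zero_lt_real.1 hd
    -- boundedness of the normalized entries
    set u : ℕ → (Fin 3 × Fin n × Fin n) → ℂ :=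
      fun m p => ![X' m, Y' m, Z' m] p.1 p.2.1 p.2.2 with hu
    have hubd : ∀ m, u m ∈ Metric.closedBall (0 : (Fin 3 × Fin n × Fin n) → ℂ) 2 := by
      intro m
      rw [Metric.mem_closedBall, dist_zero_right]
      refine (pi_norm_le_iff_of_nonneg (by norm_num)).2 ?_
      rintro ⟨c, i, j⟩
      fin_cases c
      · simpa [hu] using entries_bounded (hX' m) ((hY' m).add (hZ' m))
          (by rw [← hsum1 m]; abel) i j
      · simpa [hu] using entries_bounded (hY' m) ((hX' m).add (hZ' m))
          (by rw [← hsum1 m]; abel) i j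
      · simpa [hu] using entries_bounded (hZ' m) ((hX' m).add (hY' m))
          (by rw [← hsum1 m]; abel) i j
    obtain ⟨a, -, ψ, hψ, hlim⟩ :=
      (isCompact_closedBall (0 : (Fin 3 × Fin n × Fin n) → ℂ) 2).tendsto_subseq hubd
    set X₀ : Matrix (Fin n) (Fin n) ℂ := Matrix.of fun i j => a (0, i, j) with hX₀def
    set Y₀ : Matrix (Fin n) (Fin n) ℂ := Matrix.of fun i j => a (1, i, j) with hY₀def
    set Z₀ : Matrix (Fin n) (Fin n) ℂ := Matrix.of fun i j => a (2, i, j) with hZ₀def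
    have hXlim : ∀ i j, Tendsto (fun m => X' (ψ m) i j) atTop (nhds (X₀ i j)) := by
      intro i j
      have := tendsto_pi_nhds.1 hlim (0, i, j)
      simpa [hu, hX₀def] using this
    have hYlim : ∀ i j, Tendsto (fun m => Y' (ψ m) i j) atTop (nhds (Y₀ i j)) := by
      intro i j
      have := tendsto_pi_nhds.1 hlim (1, i, j)
      simpa [hu, hY₀def] using this
    have hZlim : ∀ i j, Tendsto (fun m => Z' (ψ m) i j) atTop (nhds (Z₀ i j)) := by
      intro i j
      have := tendsto_pi_nhds.1 hlim (2, i, j)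
      simpa [hu, hZ₀def] using this
    have hX₀psd : X₀.PosSemidef := posSemidef_of_tendsto (fun m => hX' (ψ m)) hXlim
    have hY₀psd : Y₀.PosSemidef := posSemidef_of_tendsto (fun m => hY' (ψ m)) hYlim
    have hZ₀psd : Z₀.PosSemidef := posSemidef_of_tendsto (fun m => hZ' (ψ m)) hZlim
    -- convergence of determinants
    have hdet_lim : ∀ v : Fin 3 → ℂ,
        Tendsto (fun m => (v 0 • X' (ψ m) + v 1 • Y' (ψ m) + v 2 • Z' (ψ m)).det) atTop
          (nhds ((v 0 • X₀ + v 1 • Y₀ + v 2 • Z₀).det)) := by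
      intro v
      have hmat : Tendsto (fun m => v 0 • X' (ψ m) + v 1 • Y' (ψ m) + v 2 • Z' (ψ m)) atTop
          (nhds (v 0 • X₀ + v 1 • Y₀ + v 2 • Z₀)) := by
        apply tendsto_matrix_entrywise
        intro i j
        have : Tendsto (fun m => v 0 * X' (ψ m) i j + v 1 * Y' (ψ m) i j + v 2 * Z' (ψ m) i j)
            atTop (nhds (v 0 * X₀ i j + v 1 * Y₀ i j + v 2 * Z₀ i j)) :=
          (((hXlim i j).const_mul _).add ((hYlim i j).const_mul _)).add
            ((hZlim i j).const_mul _)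
        simpa [Matrix.add_apply, Matrix.smul_apply, smul_eq_mul] using this
      exact ((Continuous.matrix_det continuous_id).tendsto _).comp hmat
    -- convergence of s along the subsequence
    set sF : ℝ := MvPolynomial.eval w1 F with hsF
    have hs_lim : Tendsto (fun m => ((s (ψ m) : ℝ) : ℂ)) atTop (nhds ((sF : ℝ) : ℂ)) := by
      have h := (tendsto_eval_map hhomFs hhom hconv
        (fun i => ((w1 i : ℝ) : ℂ))).comp (hψ.tendsto_atTop)
      have heq2 : MvPolynomial.eval (fun i => ((w1 i : ℝ) : ℂ))
          (MvPolynomial.map (algebraMap ℝ ℂ) F) = ((sF : ℝ) : ℂ) := eval_map_ofReal F w1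
      rw [heq2] at h
      apply h.congr
      intro m
      simp only [Function.comp_apply]
      rw [eval_map_ofReal]
    -- the limit identity, pointwise
    have hv : ∀ v : Fin 3 → ℂ,
        MvPolynomial.eval v (MvPolynomial.map (algebraMap ℝ ℂ) F)
          = ((sF : ℝ) : ℂ) * (v 0 • X₀ + v 1 • Y₀ + v 2 • Z₀).det := by
      intro v
      have hleft : Tendsto (fun m =>
          MvPolynomial.eval v (MvPolynomial.map (algebraMap ℝ ℂ) (Fs (ψ m)))) atTop
          (nhds (MvPolynomial.eval v (MvPolynomial.map (algebraMap ℝ ℂ) F))) := by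
        have := (tendsto_eval_map hhomFs hhom hconv v).comp (hψ.tendsto_atTop)
        exact this.congr fun m => rfl
      have hright : Tendsto (fun m =>
          MvPolynomial.eval v (MvPolynomial.map (algebraMap ℝ ℂ) (Fs (ψ m)))) atTop
          (nhds (((sF : ℝ) : ℂ) * (v 0 • X₀ + v 1 • Y₀ + v 2 • Z₀).det)) := by
        have := hs_lim.mul (hdet_lim v)
        simpa only [← keym] using this
      exact tendsto_nhds_unique hleft hright
    -- corner evaluations
    have hcorner : ∀ w : Fin 3 → ℝ,
        ((MvPolynomial.eval w F : ℝ) : ℂ)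
          = ((sF : ℝ) : ℂ) * (((w 0 : ℝ) : ℂ) • X₀ + ((w 1 : ℝ) : ℂ) • Y₀
              + ((w 2 : ℝ) : ℂ) • Z₀).det := by
      intro w
      rw [← eval_map_ofReal F w]
      exact hv _
    have hX₀det : ((MvPolynomial.eval ![1, 0, 0] F : ℝ) : ℂ) = ((sF : ℝ) : ℂ) * X₀.det := by
      have := hcorner ![1, 0, 0]
      simpa using this
    have hY₀det : ((MvPolynomial.eval ![0, 1, 0] F : ℝ) : ℂ) = ((sF : ℝ) : ℂ) * Y₀.det := by
      have := hcorner ![0, 1, 0]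
      simpa using this
    have hZ₀det : ((MvPolynomial.eval ![0, 0, 1] F : ℝ) : ℂ) = ((sF : ℝ) : ℂ) * Z₀.det := by
      have := hcorner ![0, 0, 1]
      simpa using this
    have hsFne : ((sF : ℝ) : ℂ) ≠ 0 := by
      intro h0
      apply h1
      have := hX₀det
      rw [h0, zero_mul] at this
      exact_mod_cast this
    have hX₀detne : X₀.det ≠ 0 := by
      intro h0
      apply h1
      rw [h0, mul_zero] at hX₀det
      exact_mod_cast hX₀det
    have hY₀detne : Y₀.det ≠ 0 := by
      intro h0
      apply h2
      rw [h0, mul_zero] at hY₀det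
      exact_mod_cast hY₀det
    have hZ₀detne : Z₀.det ≠ 0 := by
      intro h0
      apply h3
      rw [h0, mul_zero] at hZ₀det
      exact_mod_cast hZ₀det
    -- positivity of sF
    have hsreal : Tendsto (fun m => s (ψ m)) atTop (nhds sF) := by
      have := (Complex.continuous_re.tendsto _).comp hs_lim
      simpa [Function.comp_def] using this
    have hsFpos : 0 < sF := by
      rcases lt_or_eq_of_le (ge_of_tendsto' hsreal fun m => (hspos (ψ m)).le) with h | h
      · exact h
      · exact absurd (by exact_mod_cast h.symm : ((sF : ℝ) : ℂ) = 0) hsFne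
    -- rescale
    set c : ℝ := sF ^ ((n : ℝ)⁻¹) with hc
    have hcpos : 0 < c := Real.rpow_pos_of_pos hsFpos _
    have hcn : c ^ n = sF := by
      rw [hc, ← Real.rpow_natCast (sF ^ ((n : ℝ)⁻¹)) n, ← Real.rpow_mul hsFpos.le]
      rw [inv_mul_cancel₀ (by exact_mod_cast hn.ne' : (n : ℝ) ≠ 0), Real.rpow_one]
    have hX₀pos : X₀.PosDef := posDef_of_posSemidef_det_ne_zero hX₀psd hX₀detne
    have hY₀pos : Y₀.PosDef := posDef_of_posSemidef_det_ne_zero hY₀psd hY₀detne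
    have hZ₀pos : Z₀.PosDef := posDef_of_posSemidef_det_ne_zero hZ₀psd hZ₀detne
    refine ⟨hhom, (c : ℂ) • X₀, (c : ℂ) • Y₀, (c : ℂ) • Z₀,
      posDef_smul_ofReal hX₀pos hcpos, posDef_smul_ofReal hY₀pos hcpos,
      posDef_smul_ofReal hZ₀pos hcpos, ?_⟩
    apply MvPolynomial.funext
    intro v
    rw [eval_detPoly3, hv v]
    have hcomb : v 0 • ((c : ℂ) • X₀) + v 1 • ((c : ℂ) • Y₀) + v 2 • ((c : ℂ) • Z₀)
        = (c : ℂ) • (v 0 • X₀ + v 1 • Y₀ + v 2 • Z₀) := by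
      simp only [smul_smul, smul_add, mul_comm]
    rw [hcomb, Matrix.det_smul, Fintype.card_fin]
    congr 1
    rw [← hcn]
    push_cast
    ring
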